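/- Let H be a Hilbert space, P, P̄ orthogonal projections with P + P̄ = 1, K self-adjoint and bounded below, and suppose P̄ K P̄ ≥ δ P̄ on P̄H for some δ > 0. If additionally P K P̄ (P̄ K P̄)^{-1} P̄ K P ≤ P K P − μ P for some μ > 0 on PH, then the Feshbach operator F(K) = P K P − P K P̄ (P̄ K P̄)^{-1} P̄ K P satisfies F(K) ≥ μ P, and consequently K is bounded invertible on H. -/

import Mathlib

open scoped RealInnerProductSpace

set_option maxHeartbeats 1000000

/-- positivity/invertibility transfer for the Feshbach map: if `K` is
self-adjoint and bounded below, `QKQ ≥ δ Q` on `ran Q` (with bounded inverse `R` there),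
and `P K Q (QKQ)⁻¹ Q K P ≤ P K P − μ P` on `ran P`, then the Feshbach operator
satisfies `F(K) ≥ μ P`, and consequently `K` is bounded invertible. -/
theorem feshbach_positivity
    {E : Type*} [NormedAddCommGroup E] [InnerProductSpace ℝ E] [CompleteSpace E]
    (P Q K R : E →L[ℝ] E) (μ δ : ℝ)
    (hPsa : IsSelfAdjoint P) (hPidem : P.comp P = P)
    (hQsa : IsSelfAdjoint Q) (hQidem : Q.comp Q = Q)
    (hPQ : P + Q = 1)
    (hKsa : IsSelfAdjoint K)
    (hKlb : ∃ mlb : ℝ, ∀ ψ : E, mlb * ‖ψ‖ ^ 2 ≤ ⟪ψ, K ψ⟫)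
    (hδ : 0 < δ)
    (hQKQ : ∀ ψ : E, δ * ‖Q ψ‖ ^ 2 ≤ ⟪Q ψ, K (Q ψ)⟫)
    (hR1 : R.comp ((Q.comp K).comp Q) = Q)
    (hR2 : ((Q.comp K).comp Q).comp R = Q)
    (hR3 : (Q.comp R).comp Q = R)
    (hμ : 0 < μ)
    (hform : ∀ ψ : E,
      ⟪P ψ, K (Q (R (Q (K (P ψ)))))⟫ ≤ ⟪P ψ, K (P ψ)⟫ - μ * ‖P ψ‖ ^ 2) :
    (∀ ψ : E, μ * ‖P ψ‖ ^ 2 ≤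
      ⟪P ψ, K (P ψ)⟫ - ⟪P ψ, K (Q (R (Q (K (P ψ)))))⟫) ∧
    ∃ S : E →L[ℝ] E, K.comp S = 1 ∧ S.comp K = 1 := by
  have hpart1 : ∀ ψ : E, μ * ‖P ψ‖ ^ 2 ≤
      ⟪P ψ, K (P ψ)⟫ - ⟪P ψ, K (Q (R (Q (K (P ψ)))))⟫ := fun ψ => by
    linarith [hform ψ]
  refine ⟨hpart1, ?_⟩
  -- pointwise identities
  have hPQ' : ∀ x : E, P x + Q x = x := fun x => by
    have := congrArg (fun T : E →L[ℝ] E => T x) hPQ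
    simpa using this
  have hQ2 : ∀ x : E, Q (Q x) = Q x := fun x => by
    have := congrArg (fun T : E →L[ℝ] E => T x) hQidem
    simpa using this
  have hR3' : ∀ x : E, Q (R (Q x)) = R x := fun x => by
    have := congrArg (fun T : E →L[ℝ] E => T x) hR3
    simpa using this
  have hRQ : ∀ x : E, R (Q x) = R x := fun x => by
    conv_lhs => rw [← hR3' (Q x), hQ2, hR3']
  have hR1' : ∀ x : E, R (K (Q x)) = Q x := fun x => by
    have := congrArg (fun T : E →L[ℝ] E => T x) hR1
    simp only [ContinuousLinearMap.comp_apply] at this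
    rwa [hRQ] at this
  -- main quantitative bound
  set c₁ : ℝ := (1 + ‖K‖ * ‖R‖) / μ with hc₁
  have hc₁0 : 0 ≤ c₁ := by positivity
  set C : ℝ := c₁ + ‖R‖ + ‖R‖ * ‖K‖ * c₁ with hC
  have hC0 : 0 ≤ C := by positivity
  have hbound : ∀ ψ : E, ‖ψ‖ ≤ C * ‖K ψ‖ := by
    intro ψ
    set η : E := K ψ with hη
    -- Q ψ = R η - R (K (P ψ))
    have hQψ : Q ψ = R η - R (K (P ψ)) := by
      have h1 : R η = R (K (P ψ)) + Q ψ := by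
        rw [hη]
        conv_lhs => rw [← hPQ' ψ]
        rw [map_add, map_add, hR1']
      rw [h1]; abel
    -- bound on ‖P ψ‖
    have hKP : K (P ψ) = η - K (R η) + K (R (K (P ψ))) := by
      have h2 : P ψ = ψ - Q ψ := eq_sub_of_add_eq (hPQ' ψ)
      calc K (P ψ) = K ψ - K (Q ψ) := by rw [h2, map_sub]
        _ = η - (K (R η) - K (R (K (P ψ)))) := by rw [hQψ, map_sub, hη]
        _ = η - K (R η) + K (R (K (P ψ))) := by abel
    have hkey : μ * ‖P ψ‖ ^ 2 ≤ ⟪P ψ, η⟫ - ⟪P ψ, K (R η)⟫ := by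
      have h3 := hpart1 ψ
      rw [hR3' (K (P ψ))] at h3
      have h4 : ⟪P ψ, K (P ψ)⟫ = ⟪P ψ, η⟫ - ⟪P ψ, K (R η)⟫ + ⟪P ψ, K (R (K (P ψ)))⟫ := by
        conv_lhs => rw [hKP]
        rw [inner_add_right, inner_sub_right]
      linarith
    have hcs1 : ⟪P ψ, η⟫ ≤ ‖P ψ‖ * ‖η‖ := real_inner_le_norm _ _
    have hcs2 : -⟪P ψ, K (R η)⟫ ≤ ‖P ψ‖ * (‖K‖ * (‖R‖ * ‖η‖)) := by
      have := real_inner_le_norm (P ψ) (-(K (R η)))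
      rw [inner_neg_right, norm_neg] at this
      refine this.trans ?_
      have h5 : ‖K (R η)‖ ≤ ‖K‖ * (‖R‖ * ‖η‖) :=
        (K.le_opNorm _).trans (by
          have := R.le_opNorm η
          nlinarith [norm_nonneg K, norm_nonneg (R η)])
      nlinarith [norm_nonneg (P ψ), norm_nonneg (K (R η))]
    have hPbound : ‖P ψ‖ ≤ c₁ * ‖η‖ := by
      rcases eq_or_lt_of_le (norm_nonneg (P ψ)) with h0 | hp
      · rw [← h0]; positivity
      · have hk : μ * ‖P ψ‖ ^ 2 ≤ ‖P ψ‖ * ((1 + ‖K‖ * ‖R‖) * ‖η‖) := by nlinarith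
        rw [hc₁, div_mul_eq_mul_div, le_div_iff₀ hμ]
        nlinarith
    have hQbound : ‖Q ψ‖ ≤ ‖R‖ * ‖η‖ + ‖R‖ * ‖K‖ * ‖P ψ‖ := by
      rw [hQψ]
      refine (norm_sub_le _ _).trans ?_
      have h6 : ‖R η‖ ≤ ‖R‖ * ‖η‖ := R.le_opNorm _
      have h7 : ‖R (K (P ψ))‖ ≤ ‖R‖ * ‖K‖ * ‖P ψ‖ := by
        refine (R.le_opNorm _).trans ?_
        have := K.le_opNorm (P ψ)
        nlinarith [norm_nonneg R]
      linarith
    have h8 : ‖ψ‖ ≤ ‖P ψ‖ + ‖Q ψ‖ := by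
      conv_lhs => rw [← hPQ' ψ]
      exact norm_add_le _ _
    have h9 : ‖R‖ * ‖K‖ * ‖P ψ‖ ≤ ‖R‖ * ‖K‖ * (c₁ * ‖η‖) :=
      mul_le_mul_of_nonneg_left hPbound (by positivity)
    rw [hC]
    nlinarith
  -- K injective
  have hker : K.ker = ⊥ := by
    rw [LinearMap.ker_eq_bot, ContinuousLinearMap.coe_coe]
    intro x y hxy
    have : ‖x - y‖ ≤ C * ‖K (x - y)‖ := hbound _
    rw [map_sub, hxy, sub_self, norm_zero, mul_zero] at this
    have := le_antisymm this (norm_nonneg _)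
    rwa [norm_sub_eq_zero_iff] at this
  -- K has closed range
  have hanti : AntilipschitzWith (Real.toNNReal C) K :=
    K.antilipschitz_of_bound fun x => by
      rw [Real.coe_toNNReal C hC0]; exact hbound x
  haveI : CompleteSpace K.range := hanti.completeSpace_range_clm
  -- K surjective
  have hKsym : ∀ x y : E, ⟪K x, y⟫ = ⟪x, K y⟫ :=
    (ContinuousLinearMap.isSelfAdjoint_iff_isSymmetric.mp hKsa)
  have hrange : K.range = ⊤ := by
    rw [← Submodule.orthogonal_eq_bot_iff]
    rw [Submodule.eq_bot_iff]
    intro x hx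
    have hKx : K x = 0 := by
      have h10 : ⟪K x, K x⟫ = 0 := by
        have := (Submodule.mem_orthogonal _ x).mp hx (K (K x)) ⟨K x, rfl⟩
        rwa [hKsym (K x) x, real_inner_comm] at this
      exact inner_self_eq_zero.mp h10
    have : ‖x‖ ≤ C * ‖K x‖ := hbound x
    rw [hKx, norm_zero, mul_zero] at this
    exact norm_eq_zero.mp (le_antisymm this (norm_nonneg _))
  -- build the inverse
  refine ⟨((ContinuousLinearEquiv.ofBijective K hker hrange).symm : E →L[ℝ] E),
    ContinuousLinearMap.ext fun x => ?_, ContinuousLinearMap.ext fun x => ?_⟩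
  · simp only [ContinuousLinearMap.comp_apply, ContinuousLinearMap.one_apply,
      ContinuousLinearEquiv.coe_coe]
    exact ContinuousLinearEquiv.ofBijective_apply_symm_apply K hker hrange x
  · simp only [ContinuousLinearMap.comp_apply, ContinuousLinearMap.one_apply,
      ContinuousLinearEquiv.coe_coe]
    exact ContinuousLinearEquiv.ofBijective_symm_apply_apply K hker hrange x
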